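/- Let V, g, φ, ξ, η, A, D be as in the context, let k be a nonzero real number, suppose Aξ = αξ for some real number α (the Hopf case) and that A satisfies the Maeda relations for α. Then A_T^{(k)} cannot be η-pure with respect to φ: it is impossible that A_T^{(k)}(φX, Y) = A_T^{(k)}(X, φY) for all X, Y ∈ D. (Theorem 4, Hopf case.) -/

import Mathlib

open scoped InnerProductSpace

/-- The `k`-th Cho operator `F^{(k)}_X Y = g(φ(AX), Y)·ξ − η(Y)·φ(AX) − k·η(X)·φY`. -/
noncomputable def choF {V : Type*} [NormedAddCommGroup V] [InnerProductSpace ℝ V]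
    (φ A : V →ₗ[ℝ] V) (ξ : V) (k : ℝ) (X Y : V) : V :=
  ⟪φ (A X), Y⟫_ℝ • ξ - ⟪Y, ξ⟫_ℝ • φ (A X) - (k * ⟪X, ξ⟫_ℝ) • φ Y

/-- The `k`-th torsion operator `T^{(k)}_X Y = F^{(k)}_X Y − F^{(k)}_Y X`. -/
noncomputable def torT {V : Type*} [NormedAddCommGroup V] [InnerProductSpace ℝ V]
    (φ A : V →ₗ[ℝ] V) (ξ : V) (k : ℝ) (X Y : V) : V :=
  choF φ A ξ k X Y - choF φ A ξ k Y X

/-- `A_T^{(k)}(X, Y) = T^{(k)}_X (A Y) − A (T^{(k)}_X Y)`. -/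
noncomputable def AT {V : Type*} [NormedAddCommGroup V] [InnerProductSpace ℝ V]
    (φ A : V →ₗ[ℝ] V) (ξ : V) (k : ℝ) (X Y : V) : V :=
  torT φ A ξ k X (A Y) - A (torT φ A ξ k X Y)

theorem thm4_hopf {V : Type*} [NormedAddCommGroup V] [InnerProductSpace ℝ V]
    [FiniteDimensional ℝ V] (hdim : 5 ≤ Module.finrank ℝ V)
    (φ : V →ₗ[ℝ] V) (ξ : V) (hξ : ‖ξ‖ = 1)
    (hφφ : ∀ X : V, φ (φ X) = -X + ⟪X, ξ⟫_ℝ • ξ)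
    (hφg : ∀ X Y : V, ⟪φ X, φ Y⟫_ℝ = ⟪X, Y⟫_ℝ - ⟪X, ξ⟫_ℝ * ⟪Y, ξ⟫_ℝ)
    (A : V →ₗ[ℝ] V) (hA : ∀ X Y : V, ⟪A X, Y⟫_ℝ = ⟪X, A Y⟫_ℝ)
    (k : ℝ) (hk : k ≠ 0)
    (α : ℝ) (hAξ : A ξ = α • ξ)
    (hMaeda : ∀ (X : V) (l : ℝ), ‖X‖ = 1 → ⟪X, ξ⟫_ℝ = 0 → A X = l • X →
      2 * l - α ≠ 0 ∧ A (φ X) = ((α * l + 2) / (2 * l - α)) • φ X) :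
    ¬ (∀ X Y : V, ⟪X, ξ⟫_ℝ = 0 → ⟪Y, ξ⟫_ℝ = 0 →
      AT φ A ξ k (φ X) Y = AT φ A ξ k X (φ Y)) := by
  intro h
  -- basic facts
  have hξξ : ⟪ξ, ξ⟫_ℝ = 1 := by
    rw [real_inner_self_eq_norm_sq, hξ]; norm_num
  have hηφ : ∀ X : V, ⟪φ X, ξ⟫_ℝ = 0 := by
    intro X
    have h1 := hφg (φ X) (φ X)
    rw [hφφ X] at h1
    have h2 := hφg X X
    simp only [inner_add_left, inner_add_right, inner_neg_left, inner_neg_right,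
      inner_smul_left, inner_smul_right, RCLike.conj_to_real, hξξ,
      real_inner_comm ξ X] at h1
    have e : ⟪ξ, X⟫_ℝ * ⟪ξ, X⟫_ℝ = ⟪X, ξ⟫_ℝ * ⟪X, ξ⟫_ℝ := by
      rw [real_inner_comm ξ X]
    have h3 : (⟪φ X, ξ⟫_ℝ) ^ 2 = 0 := by nlinarith [h1, h2, e]
    exact pow_eq_zero_iff (n := 2) (by norm_num) |>.mp h3
  have hskew : ∀ X Y : V, ⟪φ X, Y⟫_ℝ = -⟪X, φ Y⟫_ℝ := by
    intro X Y
    have h1 := hφg X (φ Y)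
    rw [hφφ Y, hηφ Y, mul_zero, sub_zero] at h1
    simp only [inner_add_right, inner_neg_right, inner_smul_right, hηφ] at h1
    linarith [h1]
  -- find a unit eigenvector of A orthogonal to ξ
  have hξ0 : ξ ≠ 0 := by intro h0; rw [h0, norm_zero] at hξ; norm_num at hξ
  have hinv : ∀ v ∈ (ℝ ∙ ξ)ᗮ, A v ∈ (ℝ ∙ ξ)ᗮ := by
    intro v hv
    rw [Submodule.mem_orthogonal_singleton_iff_inner_right] at hv ⊢
    rw [real_inner_comm, hA, hAξ, inner_smul_right, real_inner_comm, hv, mul_zero]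
  have hnt : Nontrivial ((ℝ ∙ ξ)ᗮ : Submodule ℝ V) := by
    have h1 : Module.finrank ℝ (ℝ ∙ ξ) + Module.finrank ℝ ((ℝ ∙ ξ)ᗮ : Submodule ℝ V)
        = Module.finrank ℝ V := Submodule.finrank_add_finrank_orthogonal _
    have h2 : Module.finrank ℝ (ℝ ∙ ξ) = 1 := finrank_span_singleton hξ0
    have : 1 ≤ Module.finrank ℝ ((ℝ ∙ ξ)ᗮ : Submodule ℝ V) := by omega
    exact Module.nontrivial_of_finrank_pos (R := ℝ) this
  have hAsymm : (A : V →ₗ[ℝ] V).IsSymmetric := fun x y => hA x y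
  have hBsymm : (A.restrict hinv).IsSymmetric := hAsymm.restrict_invariant hinv
  obtain ⟨l, hEig⟩ : ∃ l : ℝ, Module.End.HasEigenvalue (A.restrict hinv) l :=
    ⟨_, hBsymm.hasEigenvalue_iSup_of_finiteDimensional⟩
  obtain ⟨x, hx⟩ := hEig.exists_hasEigenvector
  have hx0 : (x : V) ≠ 0 := fun h0 => hx.2 (by exact_mod_cast Subtype.ext h0)
  have hxeig : A (x : V) = l • (x : V) := by
    have h1 : (A.restrict hinv) x = l • x := Module.End.mem_eigenspace_iff.mp hx.1
    calc A (x : V) = ((A.restrict hinv) x : V) := rfl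
      _ = ((l • x : (ℝ ∙ ξ)ᗮ) : V) := by rw [h1]
      _ = l • (x : V) := rfl
  set X : V := ‖(x : V)‖⁻¹ • (x : V) with hXdef
  have hnx : ‖(x : V)‖ ≠ 0 := norm_ne_zero_iff.mpr hx0
  have hXnorm : ‖X‖ = 1 := by
    rw [hXdef, norm_smul, norm_inv, norm_norm, inv_mul_cancel₀ hnx]
  have hXξ : ⟪X, ξ⟫_ℝ = 0 := by
    have hxK : ⟪(x : V), ξ⟫_ℝ = 0 :=
      Submodule.mem_orthogonal_singleton_iff_inner_left.mp x.2
    rw [hXdef, inner_smul_left, RCLike.conj_to_real, hxK, mul_zero]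
  have hAX : A X = l • X := by
    rw [hXdef, map_smul, hxeig, smul_smul, mul_comm, ← smul_smul]
  obtain ⟨hne, hAφX'⟩ := hMaeda X l hXnorm hXξ hAX
  obtain ⟨m, hmm, hAφX⟩ : ∃ m : ℝ, m * (2 * l - α) = α * l + 2 ∧ A (φ X) = m • φ X :=
    ⟨(α * l + 2) / (2 * l - α), div_mul_cancel₀ _ hne, hAφX'⟩
  clear hAφX'
  -- inner products involving X
  have hXX : ⟪X, X⟫_ℝ = 1 := by rw [real_inner_self_eq_norm_sq, hXnorm]; norm_num
  have hφXξ : ⟪φ X, ξ⟫_ℝ = 0 := hηφ X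
  have hξφX : ⟪ξ, φ X⟫_ℝ = 0 := by rw [real_inner_comm]; exact hφXξ
  have hξX : ⟪ξ, X⟫_ℝ = 0 := by rw [real_inner_comm]; exact hXξ
  have hφXφX : ⟪φ X, φ X⟫_ℝ = 1 := by rw [hφg, hXξ]; simp [hXX, hXnorm]
  have hφφX : φ (φ X) = -X := by rw [hφφ, hXξ]; simp
  have hXφX : ⟪X, φ X⟫_ℝ = 0 := by
    have h1 := hskew X X
    have h2 : ⟪φ X, X⟫_ℝ = ⟪X, φ X⟫_ℝ := real_inner_comm _ _
    linarith
  have hφXX : ⟪φ X, X⟫_ℝ = 0 := by rw [real_inner_comm]; exact hXφX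
  -- the purity equation at (X, X)
  have heq := congrArg (fun v => ⟪v, ξ⟫_ℝ) (h X X hXξ hXξ)
  simp only [AT, torT, choF, hAX, hAφX, hAξ, map_smul, map_sub, map_add, map_neg,
    smul_smul, inner_smul_left, inner_smul_right, inner_sub_left, inner_sub_right,
    RCLike.conj_to_real, hφφX, inner_neg_left, inner_neg_right, smul_neg, map_zero,
    hXξ, hφXξ, hξφX, hξX, hXX, hφXφX, hXφX, hφXX, hξξ] at heq
  ring_nf at heq
  -- derive the contradiction
  have hs : (l + m) * ((l + m) - 2 * α) = 0 := by linear_combination -heq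
  rcases mul_eq_zero.mp hs with h1 | h1
  · have hm2 : m = -l := by linarith
    rw [hm2] at hmm
    nlinarith [sq_nonneg l]
  · have hm2 : m = 2 * α - l := by linarith
    rw [hm2] at hmm
    nlinarith [sq_nonneg (l - α)]
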